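/- Let 𝒟 be a dyadic grid, F a fixed cube, ℱ a collection of dyadic subcubes of F, and τ ≥ 1. Define the τ-shifted corona 𝒞_F^{τ-shift} = [𝒞_F ∖ 𝒩^τ(F)] ∪ ⋃_{F' ∈ 𝔠_ℱ(F)} [𝒩^τ(F') ∖ 𝒩^τ(F)], where 𝒩^τ(G) = {J ∈ 𝒟 : J ⊂ G, ℓ(J) > 2^{-τ}ℓ(G)} and 𝒞_F is the corona of F. Then the shifted coronas have bounded overlap: for each J ∈ 𝒟, Σ_{F ∈ ℱ} 1_{𝒞_F^{τ-shift}}(J) ≤ τ. -/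

import Mathlib

noncomputable section

/-- The standard dyadic cube of scale `2^k` at position `m`. -/
def DSet (n : ℕ) (J : ℤ × (Fin n → ℤ)) : Set (Fin n → ℝ) :=
  {x | ∀ i, (J.2 i : ℝ) * 2 ^ J.1 ≤ x i ∧ x i < ((J.2 i : ℝ) + 1) * 2 ^ J.1}

/-- Containment of dyadic cubes. -/
def dle (n : ℕ) (J I : ℤ × (Fin n → ℤ)) : Prop := DSet n J ⊆ DSet n I

/-- Strict containment of dyadic cubes. -/
def dlt (n : ℕ) (J I : ℤ × (Fin n → ℤ)) : Prop := DSet n J ⊂ DSet n I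

/-- The corona `𝒞_F` of `F` relative to the stopping collection `ℱ`:
dyadic cubes `I ⊆ F` not contained in any `F' ∈ ℱ` with `F' ⊊ F`. -/
def corona (n : ℕ) (ℱ : Set (ℤ × (Fin n → ℤ))) (F : ℤ × (Fin n → ℤ)) :
    Set (ℤ × (Fin n → ℤ)) :=
  {I | dle n I F ∧ ∀ F' ∈ ℱ, dlt n F' F → ¬ dle n I F'}

/-- `𝒩^τ(G) = {J : J ⊆ G and ℓ(J) > 2^{-τ} ℓ(G)}`. -/
def nbhd (n : ℕ) (τ : ℕ) (G : ℤ × (Fin n → ℤ)) : Set (ℤ × (Fin n → ℤ)) :=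
  {J | dle n J G ∧ G.1 - (τ : ℤ) < J.1}

/-- The `ℱ`-children of `F`: maximal members of `ℱ` strictly contained in `F`. -/
def fchildren (n : ℕ) (ℱ : Set (ℤ × (Fin n → ℤ))) (F : ℤ × (Fin n → ℤ)) :
    Set (ℤ × (Fin n → ℤ)) :=
  {F' | F' ∈ ℱ ∧ dlt n F' F ∧
    ∀ F'' ∈ ℱ, dlt n F'' F → dle n F' F'' → F'' = F'}

/-- The `τ`-shifted corona
`𝒞_F^{τ-shift} = [𝒞_F ∖ 𝒩^τ(F)] ∪ ⋃_{F' ∈ 𝔠_ℱ(F)} [𝒩^τ(F') ∖ 𝒩^τ(F)]`. -/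
def shiftedCorona (n : ℕ) (ℱ : Set (ℤ × (Fin n → ℤ))) (τ : ℕ)
    (F : ℤ × (Fin n → ℤ)) : Set (ℤ × (Fin n → ℤ)) :=
  (corona n ℱ F \ nbhd n τ F) ∪
    ⋃ F' ∈ fchildren n ℱ F, (nbhd n τ F' \ nbhd n τ F)

namespace DyadicAux

variable {n : ℕ}

lemma zp (k : ℤ) : (0:ℝ) < 2 ^ k := by positivity

/-- left corner point -/
def leftpt (n : ℕ) (J : ℤ × (Fin n → ℤ)) : Fin n → ℝ := fun i => (J.2 i : ℝ) * 2 ^ J.1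

lemma leftpt_mem (J : ℤ × (Fin n → ℤ)) : leftpt n J ∈ DSet n J := by
  intro i
  simp only [leftpt]
  refine ⟨le_refl _, ?_⟩
  have := zp J.1
  nlinarith

lemma coord_sub {k l m p : ℤ} (hkl : k ≤ l) {x : ℝ}
    (h1 : (m:ℝ) * 2 ^ k ≤ x) (h2 : x < ((m:ℝ) + 1) * 2 ^ k)
    (h3 : (p:ℝ) * 2 ^ l ≤ x) (h4 : x < ((p:ℝ) + 1) * 2 ^ l) :
    (p:ℝ) * 2 ^ l ≤ (m:ℝ) * 2 ^ k ∧ ((m:ℝ) + 1) * 2 ^ k ≤ ((p:ℝ) + 1) * 2 ^ l := by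
  set d : ℕ := (l - k).toNat with hd
  have hld : l = k + d := by omega
  have hpow : (2:ℝ) ^ l = (2:ℝ) ^ (d:ℕ) * 2 ^ k := by
    rw [hld, zpow_add₀ (by norm_num : (2:ℝ) ≠ 0)]
    rw [zpow_natCast]; ring
  have hk := zp k
  -- p * 2^d ≤ m
  have ha : ((p * 2 ^ d : ℤ) : ℝ) < (m:ℝ) + 1 := by
    push_cast
    have : (p:ℝ) * 2 ^ d * 2 ^ k < ((m:ℝ) + 1) * 2 ^ k := by
      rw [mul_assoc, ← hpow]; linarith
    exact lt_of_mul_lt_mul_right this (le_of_lt hk)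
  have ha' : (p * 2 ^ d : ℤ) ≤ m := by exact_mod_cast Int.lt_add_one_iff.mp (by exact_mod_cast ha)
  have hb : (m:ℝ) < ((p + 1) * 2 ^ d : ℤ) := by
    push_cast
    have : (m:ℝ) * 2 ^ k < ((p:ℝ) + 1) * 2 ^ d * 2 ^ k := by
      rw [mul_assoc, ← hpow]; linarith
    exact lt_of_mul_lt_mul_right this (le_of_lt hk)
  have hb' : (m + 1 : ℤ) ≤ (p + 1) * 2 ^ d := by
    have : (m : ℤ) < (p + 1) * 2 ^ d := by exact_mod_cast hb
    omega
  constructor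
  · have : ((p * 2 ^ d : ℤ) : ℝ) ≤ (m:ℝ) := by exact_mod_cast ha'
    push_cast at this
    rw [hpow]
    nlinarith
  · have : ((m:ℝ) + 1) ≤ ((p + 1) * 2 ^ d : ℤ) := by exact_mod_cast hb'
    push_cast at this
    rw [hpow]
    nlinarith

/-- comparability: common point + smaller scale gives inclusion -/
lemma dle_of_common {J I : ℤ × (Fin n → ℤ)} {x : Fin n → ℝ}
    (hxJ : x ∈ DSet n J) (hxI : x ∈ DSet n I) (hkl : J.1 ≤ I.1) : dle n J I := by
  intro y hy i
  obtain ⟨h1, h2⟩ := hxJ i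
  obtain ⟨h3, h4⟩ := hxI i
  obtain ⟨ha, hb⟩ := coord_sub hkl h1 h2 h3 h4
  obtain ⟨hy1, hy2⟩ := hy i
  exact ⟨le_trans ha hy1, lt_of_lt_of_le hy2 hb⟩

lemma scale_le (hn : 0 < n) {J I : ℤ × (Fin n → ℤ)} (h : dle n J I) : J.1 ≤ I.1 := by
  by_contra hlt
  push_neg at hlt
  set i : Fin n := ⟨0, hn⟩
  obtain ⟨h3, h4⟩ := h (leftpt_mem J) i
  simp only [leftpt] at h3 h4
  set t : ℝ := (J.2 i : ℝ) * 2 ^ J.1 + 2 ^ I.1 with ht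
  have hyJ : Function.update (leftpt n J) i t ∈ DSet n J := by
    intro j
    by_cases hj : j = i
    · subst hj
      rw [Function.update_self]
      constructor
      · have := zp I.1; simp [ht]; linarith
      · have h5 : (2:ℝ) ^ I.1 < 2 ^ J.1 := by
          apply zpow_lt_zpow_right₀ (by norm_num : (1:ℝ) < 2) hlt
        simp [ht]; nlinarith
    · rw [Function.update_of_ne hj]
      exact leftpt_mem J j
  have := (h hyJ i).2
  rw [Function.update_self] at this
  -- t < (p i + 1) * 2^l, and p i * 2^l ≤ m i * 2^k
  have : (J.2 i : ℝ) * 2 ^ J.1 + 2 ^ I.1 < ((I.2 i : ℝ) + 1) * 2 ^ I.1 := this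
  nlinarith [zp I.1]

lemma eq_of_dle_dle (hn : 0 < n) {J I : ℤ × (Fin n → ℤ)}
    (h1 : dle n J I) (h2 : dle n I J) : J = I := by
  have hk : J.1 = I.1 := le_antisymm (scale_le hn h1) (scale_le hn h2)
  have hm : J.2 = I.2 := by
    funext i
    obtain ⟨ha, hb⟩ := h1 (leftpt_mem J) i
    rw [← hk] at ha hb
    have hp := zp J.1
    have h5 : (I.2 i : ℝ) ≤ J.2 i := le_of_mul_le_mul_right ha hp
    have h6 : (J.2 i : ℝ) < (I.2 i : ℝ) + 1 := lt_of_mul_lt_mul_right hb (le_of_lt hp)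
    have h5' : (I.2 i : ℤ) ≤ J.2 i := by exact_mod_cast h5
    have h6' : (J.2 i : ℤ) < I.2 i + 1 := by exact_mod_cast h6
    omega
  exact Prod.ext hk hm

lemma dlt_of_dle_ne (hn : 0 < n) {J I : ℤ × (Fin n → ℤ)}
    (h : dle n J I) (hne : J ≠ I) : dlt n J I :=
  lt_of_le_of_ne h (fun he => hne (eq_of_dle_dle hn h he.symm.subset))

lemma dlt.dle {J I : ℤ × (Fin n → ℤ)} (h : dlt n J I) : dle n J I := le_of_lt h

end DyadicAux

open DyadicAux

/-- The `τ`-shifted coronas have overlap bounded by `τ`: for each dyadic cube `J`,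
at most `τ` cubes `F ∈ ℱ` satisfy `J ∈ 𝒞_F^{τ-shift}`. -/
theorem shifted_corona_bounded_overlap (n τ : ℕ) (hn : 0 < n) (hτ : 1 ≤ τ)
    (ℱ : Set (ℤ × (Fin n → ℤ))) (J : ℤ × (Fin n → ℤ))
    (S : Finset (ℤ × (Fin n → ℤ)))
    (hS : ∀ F ∈ S, F ∈ ℱ ∧ J ∈ shiftedCorona n ℱ τ F) :
    S.card ≤ τ := by
  classical
  -- extraction
  have hmem : ∀ F ∈ S, dle n J F ∧ J.1 + τ ≤ F.1 ∧
      (J ∈ corona n ℱ F ∨ ∃ F', F' ∈ fchildren n ℱ F ∧ J ∈ nbhd n τ F') := by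
    intro F hF
    obtain ⟨-, hsh⟩ := hS F hF
    rcases hsh with ⟨hcor, hnb⟩ | hun
    · have hle : dle n J F := hcor.1
      refine ⟨hle, ?_, Or.inl hcor⟩
      by_contra hlt
      exact hnb ⟨hle, by omega⟩
    · simp only [Set.mem_iUnion] at hun
      obtain ⟨F', hF', hmem'⟩ := hun
      obtain ⟨hnb', hnb⟩ := hmem'
      have hle : dle n J F := hnb'.1.trans hF'.2.1.subset
      refine ⟨hle, ?_, Or.inr ⟨F', hF', hnb'⟩⟩
      by_contra hlt
      exact hnb ⟨hle, by omega⟩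
  by_cases hb : ∃ F ∈ S, ∃ F', F' ∈ fchildren n ℱ F ∧ J ∈ nbhd n τ F'
  · -- all case (b)
    obtain ⟨F₀, hF₀S, F₀', hF₀', hnb₀⟩ := hb
    have hnocor : ∀ F ∈ S, J ∉ corona n ℱ F := by
      intro F hF hcor
      have h1 : F₀'.1 < J.1 + τ := by have := hnb₀.2; omega
      have h2 : J.1 + τ ≤ F.1 := (hmem F hF).2.1
      have hsub : dle n F₀' F :=
        dle_of_common (hnb₀.1 (leftpt_mem J)) ((hmem F hF).1 (leftpt_mem J)) (by omega)
      have hne : F₀' ≠ F := by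
        intro he; rw [he] at h1; omega
      exact hcor.2 F₀' hF₀'.1 (dlt_of_dle_ne hn hsub hne) hnb₀.1
    have hch : ∀ F ∈ S, ∃ F', F' ∈ fchildren n ℱ F ∧ J ∈ nbhd n τ F' := by
      intro F hF
      rcases (hmem F hF).2.2 with hcor | h
      · exact absurd hcor (hnocor F hF)
      · exact h
    choose! ch hch1 hch2 using hch
    have key : ∀ F₁ ∈ S, ∀ F₂ ∈ S, ch F₁ = ch F₂ → F₁.1 ≤ F₂.1 → F₁ = F₂ := by
      intro F₁ h₁ F₂ h₂ he hle
      by_contra hne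
      have hsub : dle n F₁ F₂ :=
        dle_of_common ((hmem F₁ h₁).1 (leftpt_mem J)) ((hmem F₂ h₂).1 (leftpt_mem J)) hle
      have hdlt : dlt n F₁ F₂ := dlt_of_dle_ne hn hsub hne
      have hmax := (hch1 F₂ h₂).2.2 F₁ (hS F₁ h₁).1 hdlt (by rw [← he]; exact (hch1 F₁ h₁).2.1.subset)
      have : dlt n (ch F₁) F₁ := (hch1 F₁ h₁).2.1
      rw [← he] at hmax
      rw [← hmax] at this
      exact (ssubset_irrefl _) this
    calc S.card ≤ (Finset.Ico J.1 (J.1 + τ)).card := by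
          apply Finset.card_le_card_of_injOn (fun F => (ch F).1)
          · intro F hF
            rw [Finset.mem_coe, Finset.mem_Ico]
            refine ⟨scale_le hn (hch2 F hF).1, ?_⟩
            have := (hch2 F hF).2
            show (ch F).1 < _
            omega
          · intro F₁ h₁ F₂ h₂ heq
            simp only at heq
            have hcommon₁ := (hch2 F₁ h₁).1 (leftpt_mem J)
            have hcommon₂ := (hch2 F₂ h₂).1 (leftpt_mem J)
            have he : ch F₁ = ch F₂ :=
              eq_of_dle_dle hn (dle_of_common hcommon₁ hcommon₂ (le_of_eq heq))
                (dle_of_common hcommon₂ hcommon₁ (le_of_eq heq.symm))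
            rcases le_total F₁.1 F₂.1 with h | h
            · exact key F₁ h₁ F₂ h₂ he h
            · exact (key F₂ h₂ F₁ h₁ he.symm h).symm
      _ = τ := by rw [Int.card_Ico]; omega
  · -- all case (a): at most one
    push_neg at hb
    have hone : S.card ≤ 1 := by
      rw [Finset.card_le_one]
      intro F₁ h₁ F₂ h₂
      have hc : ∀ F ∈ S, J ∈ corona n ℱ F := by
        intro F hF
        rcases (hmem F hF).2.2 with h | ⟨F', hF', hnb'⟩
        · exact h
        · exact (hb F hF F' hF' hnb').elim
      have key : ∀ G₁ ∈ S, ∀ G₂ ∈ S, G₁.1 ≤ G₂.1 → G₁ = G₂ := by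
        intro G₁ hg₁ G₂ hg₂ hle
        by_contra hne
        have hsub : dle n G₁ G₂ :=
          dle_of_common ((hmem G₁ hg₁).1 (leftpt_mem J)) ((hmem G₂ hg₂).1 (leftpt_mem J)) hle
        exact (hc G₂ hg₂).2 G₁ (hS G₁ hg₁).1 (dlt_of_dle_ne hn hsub hne) (hmem G₁ hg₁).1
      rcases le_total F₁.1 F₂.1 with h | h
      · exact key F₁ h₁ F₂ h₂ h
      · exact (key F₂ h₂ F₁ h₁ h).symm
    omega
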